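/- For every real p > 0 there exists a constant c₀ > 0 such that for every natural number n with 2*p ≤ n and every natural number k with 1 ≤ k and (k : ℝ) ≤ Real.sqrt n, one has (n.choose k : ℝ) * (p/n)^k * (1 - p/n)^(n - k) ≥ c₀ * (p/k)^k. -/

import Mathlib

lemma aux_pow_le_choose : ∀ k n : ℕ, k ≤ n → n ^ k ≤ k ^ k * n.choose k := by
  intro k
  induction k with
  | zero => intro n _; simp
  | succ k ih =>
    intro n hkn
    rcases Nat.exists_eq_add_of_le (Nat.one_le_of_lt (Nat.lt_of_lt_of_le (Nat.lt_succ_self k) hkn)) with ⟨m, hm⟩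
    subst hm
    have hkm : k ≤ m := by omega
    have key : (k+1) * ((1+m).choose (k+1)) = (1+m) * m.choose k := by
      rw [add_comm 1 m, mul_comm]
      simpa [Nat.succ_eq_add_one] using (Nat.add_one_mul_choose_eq m k).symm
    have ihm := ih m hkm
    rcases Nat.eq_zero_or_pos k with hk0 | hk0
    · subst hk0
      simp [Nat.choose_one_right]
    · have hkk : 0 < k ^ k := Nat.pow_pos (n := k) hk0
      have step1 : ((1+m) * k) ^ k ≤ ((k+1) * m) ^ k :=
        Nat.pow_le_pow_left (by nlinarith) k
      have h1 : (1+m) ^ (k+1) * k ^ k ≤ (k+1) ^ (k+1) * ((1+m).choose (k+1)) * k ^ k := by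
        calc (1+m) ^ (k+1) * k ^ k
            = (1+m) * ((1+m) * k) ^ k := by rw [mul_pow, pow_succ]; ring
          _ ≤ (1+m) * ((k+1) * m) ^ k := Nat.mul_le_mul_left _ step1
          _ = (1+m) * ((k+1)^k * m^k) := by rw [mul_pow]
          _ ≤ (1+m) * ((k+1)^k * (k^k * m.choose k)) :=
              Nat.mul_le_mul_left _ (Nat.mul_le_mul_left _ ihm)
          _ = (k+1)^k * ((1+m) * m.choose k) * k ^ k := by ring
          _ = (k+1)^k * ((k+1) * ((1+m).choose (k+1))) * k ^ k := by rw [key]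
          _ = (k+1) ^ (k+1) * ((1+m).choose (k+1)) * k ^ k := by rw [pow_succ]; ring
      exact Nat.le_of_mul_le_mul_right h1 hkk

lemma aux_exp_le (x : ℝ) (hx0 : 0 ≤ x) (hx2 : x ≤ 1/2) :
    Real.exp (-(x * Real.log 4)) ≤ 1 - x := by
  have h4 : Real.log 4 = 2 * Real.log 2 := by
    rw [show (4:ℝ) = 2^2 by norm_num, Real.log_pow]; push_cast; ring
  have hc := convexOn_exp.2 (Set.mem_univ (0:ℝ)) (Set.mem_univ (-Real.log 2))
    (by linarith : (0:ℝ) ≤ 1 - 2*x) (by linarith : (0:ℝ) ≤ 2*x) (by ring)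
  simp only [smul_eq_mul] at hc
  rw [Real.exp_zero, Real.exp_neg, Real.exp_log (by norm_num : (0:ℝ) < 2)] at hc
  have he : (1-2*x)*0 + 2*x*(-Real.log 2) = -(x*Real.log 4) := by rw [h4]; ring
  rw [he] at hc
  nlinarith [hc]

/-- Inequality (2.18): for a `Bin(n, p/n)` random variable `W`,
`P(W = k) ≥ c₀ (p/k)^k = c₀ e^{-k log(k/p)}` for `1 ≤ k ≤ √n`. -/
theorem binomial_point_mass_lower_bound
    (p : ℝ) (hp : 0 < p) :
    ∃ c₀ : ℝ, 0 < c₀ ∧ ∀ n : ℕ, 2 * p ≤ n → ∀ k : ℕ, 1 ≤ k → (k : ℝ) ≤ Real.sqrt n →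
      (n.choose k : ℝ) * (p / n) ^ k * (1 - p / n) ^ (n - k) ≥ c₀ * (p / k) ^ k := by
  refine ⟨Real.exp (-(p * Real.log 4)), Real.exp_pos _, ?_⟩
  intro n hn k hk1 hks
  have hn0 : (0:ℝ) < n := by linarith
  have hn1 : (1:ℝ) ≤ n := by
    have : (0:ℕ) < n := by exact_mod_cast hn0
    exact_mod_cast this
  have hk0 : (0:ℝ) < k := by exact_mod_cast hk1
  have hkn : k ≤ n := by
    have hs : Real.sqrt n ≤ n := by
      calc Real.sqrt n ≤ Real.sqrt ((n:ℝ)^2) := Real.sqrt_le_sqrt (by nlinarith)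
        _ = n := Real.sqrt_sq hn0.le
    have : (k:ℝ) ≤ n := hks.trans hs
    exact_mod_cast this
  -- part 1: choose * (p/n)^k ≥ (p/k)^k
  have hA : ((n:ℝ))^k ≤ (k:ℝ)^k * n.choose k := by exact_mod_cast aux_pow_le_choose k n hkn
  have hkpow : (0:ℝ) < (k:ℝ)^k := pow_pos hk0 k
  have hnpow : (0:ℝ) < (n:ℝ)^k := pow_pos hn0 k
  have h1 : (p/(k:ℝ))^k ≤ (n.choose k : ℝ) * (p/n)^k := by
    rw [div_pow, div_pow, mul_div_assoc', div_le_div_iff₀ hkpow hnpow]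
    have h2 := mul_le_mul_of_nonneg_left hA (pow_nonneg hp.le k)
    nlinarith [h2]
  -- part 2: (1-p/n)^(n-k) ≥ exp(-(p log 4))
  have hpn2 : p/(n:ℝ) ≤ 1/2 := by rw [div_le_iff₀ hn0]; linarith
  have hpn0 : (0:ℝ) ≤ p/(n:ℝ) := by positivity
  have hE : Real.exp (-(p/n * Real.log 4)) ≤ 1 - p/n := aux_exp_le _ hpn0 hpn2
  have hlog4 : (0:ℝ) ≤ Real.log 4 := Real.log_nonneg (by norm_num)
  have h2 : Real.exp (-(p * Real.log 4)) ≤ (1 - p/n)^(n-k) := by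
    have hsub : ((n-k:ℕ):ℝ) ≤ n := by exact_mod_cast Nat.sub_le n k
    have hsub0 : (0:ℝ) ≤ ((n-k:ℕ):ℝ) := Nat.cast_nonneg _
    have hd : ((n-k:ℕ):ℝ) * (p/n) ≤ p := by
      have hq : ((n-k:ℕ):ℝ)/n ≤ 1 := (div_le_one hn0).2 hsub
      have : ((n-k:ℕ):ℝ) * (p/n) = (((n-k:ℕ):ℝ)/n) * p := by ring
      rw [this]
      nlinarith [hq, hp.le]
    calc Real.exp (-(p * Real.log 4))
        ≤ Real.exp (((n-k:ℕ):ℝ) * (-(p/n * Real.log 4))) := by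
          apply Real.exp_le_exp.2
          nlinarith [hd, hlog4]
      _ = (Real.exp (-(p/n * Real.log 4)))^(n-k) := by
          rw [← Real.exp_nat_mul]
      _ ≤ (1 - p/n)^(n-k) := pow_le_pow_left₀ (Real.exp_pos _).le hE _
  -- combine
  have := mul_le_mul h2 h1 (by positivity) (by nlinarith [h2, Real.exp_pos (-(p * Real.log 4))])
  calc (n.choose k : ℝ) * (p/n)^k * (1 - p/n)^(n-k)
      = (1 - p/n)^(n-k) * ((n.choose k : ℝ) * (p/n)^k) := by ring
    _ ≥ Real.exp (-(p * Real.log 4)) * (p/k)^k := this
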